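/- (Additive representation of the unified skew-normal, equation (6) of the paper.) Let s, p ≥ 1, ξ ∈ ℝ^p, Ω ∈ ℝ^{p×p} symmetric positive definite with Ω = D_Ω Ω̄ D_Ω, Δ ∈ ℝ^{p×s}, γ ∈ ℝ^s, Γ ∈ ℝ^{s×s} symmetric positive definite, and assume M := [[Γ, Δᵀ],[Δ, Ω̄]] is positive definite. Let r₀ and r₁ be independent random vectors with densities φ_p(·; Ω̄ − Δ Γ⁻¹ Δᵀ) and φ_s(·; Γ) respectively. Then the conditional law of z := ξ + D_Ω (r₀ + Δ Γ⁻¹ r₁) given the event {r₁ + γ > 0 componentwise} has density sun_{p,s}(·; ξ, Ω, Δ, γ, Γ); equivalently, for every bounded measurable g : ℝ^p → ℝ, E[g(ξ + D_Ω(r₀ + Δ Γ⁻¹ r₁)) · 1{r₁ + γ > 0}] / P(r₁ + γ > 0) = ∫_{ℝ^p} g(z) · sun_{p,s}(z; ξ, Ω, Δ, γ, Γ) dz. -/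

import Mathlib

open MeasureTheory Matrix

/-- Centered multivariate normal density `φ(z; S)` with covariance `S`. -/
noncomputable def gaussPdf {ι : Type*} [Fintype ι] [DecidableEq ι]
    (S : Matrix ι ι ℝ) (z : ι → ℝ) : ℝ :=
  (2 * Real.pi) ^ (-(Fintype.card ι : ℝ) / 2) * S.det ^ (-(1 : ℝ) / 2) *
    Real.exp (-(1 / 2) * (z ⬝ᵥ (S⁻¹ *ᵥ z)))

/-- Centered multivariate normal CDF `Φ(a; S)` with covariance `S`. -/
noncomputable def gaussCdf {ι : Type*} [Fintype ι] [DecidableEq ι]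
    (S : Matrix ι ι ℝ) (a : ι → ℝ) : ℝ :=
  ∫ u in {u : ι → ℝ | ∀ i, u i ≤ a i}, gaussPdf S u

/-- `D_K`: diagonal matrix with entries `√(K i i)`. -/
noncomputable def dMat {ι : Type*} [Fintype ι] [DecidableEq ι]
    (K : Matrix ι ι ℝ) : Matrix ι ι ℝ :=
  Matrix.diagonal fun i => Real.sqrt (K i i)

/-- `K̄ := D_K⁻¹ K D_K⁻¹`: the correlation matrix associated with `K`. -/
noncomputable def corrMat {ι : Type*} [Fintype ι] [DecidableEq ι]
    (K : Matrix ι ι ℝ) : Matrix ι ι ℝ :=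
  (dMat K)⁻¹ * K * (dMat K)⁻¹

/-- The unified skew-normal density `sun(z; ξ, Ω, Δ, γ, Γ)`. -/
noncomputable def sunPdf {ι κ : Type*} [Fintype ι] [DecidableEq ι] [Fintype κ] [DecidableEq κ]
    (xi : ι → ℝ) (Om : Matrix ι ι ℝ) (De : Matrix ι κ ℝ) (ga : κ → ℝ) (Ga : Matrix κ κ ℝ)
    (z : ι → ℝ) : ℝ :=
  gaussPdf Om (z - xi) *
    gaussCdf (Ga - Deᵀ * (corrMat Om)⁻¹ * De)
      (ga + (Deᵀ * (corrMat Om)⁻¹ * (dMat Om)⁻¹) *ᵥ (z - xi)) /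
    gaussCdf Ga ga

set_option linter.unusedSectionVars false

variable {ι κ : Type*} [Fintype ι] [DecidableEq ι] [Fintype κ] [DecidableEq κ]

lemma gaussPdf_neg (S : Matrix ι ι ℝ) (z : ι → ℝ) : gaussPdf S (-z) = gaussPdf S z := by
  unfold gaussPdf
  rw [Matrix.mulVec_neg, neg_dotProduct, dotProduct_neg, neg_neg]

lemma continuous_gaussPdf (S : Matrix ι ι ℝ) : Continuous (gaussPdf S) := by
  unfold gaussPdf
  have h : Continuous fun z : ι → ℝ => z ⬝ᵥ (S⁻¹ *ᵥ z) := by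
    simp only [dotProduct, Matrix.mulVec]
    fun_prop
  fun_prop

lemma gaussPdf_nonneg {S : Matrix ι ι ℝ} (hS : 0 ≤ S.det) (z : ι → ℝ) : 0 ≤ gaussPdf S z := by
  unfold gaussPdf
  positivity

lemma gaussPdf_mulVec {S : Matrix ι ι ℝ} (B : Matrix ι ι ℝ) (hS : 0 < S.det)
    (hB : IsUnit B.det) (u : ι → ℝ) :
    gaussPdf (B * S * Bᵀ) (B *ᵥ u) = |B.det|⁻¹ * gaussPdf S u := by
  have hdet : (B * S * Bᵀ).det = B.det ^ 2 * S.det := by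
    rw [Matrix.det_mul, Matrix.det_mul, Matrix.det_transpose]; ring
  have hinv : (B * S * Bᵀ)⁻¹ = (B⁻¹)ᵀ * S⁻¹ * B⁻¹ := by
    rw [Matrix.mul_inv_rev, Matrix.mul_inv_rev, Matrix.transpose_nonsing_inv, Matrix.mul_assoc]
  have hquad : (B *ᵥ u) ⬝ᵥ ((B * S * Bᵀ)⁻¹ *ᵥ (B *ᵥ u)) = u ⬝ᵥ (S⁻¹ *ᵥ u) := by
    have h1 : (B⁻¹)ᵀ * S⁻¹ * B⁻¹ * B = (B⁻¹)ᵀ * S⁻¹ := by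
      rw [Matrix.mul_assoc, Matrix.nonsing_inv_mul B hB, Matrix.mul_one]
    rw [hinv, Matrix.mulVec_mulVec, h1, ← Matrix.mulVec_mulVec,
      Matrix.dotProduct_mulVec, Matrix.vecMul_transpose, Matrix.mulVec_mulVec,
      Matrix.nonsing_inv_mul B hB, Matrix.one_mulVec]
  have hscal : ((B.det ^ 2 * S.det) : ℝ) ^ (-(1:ℝ) / 2) = |B.det|⁻¹ * S.det ^ (-(1:ℝ) / 2) := by
    rw [Real.mul_rpow (by positivity) hS.le]
    congr 1
    rw [← sq_abs, ← Real.rpow_natCast |B.det| 2, ← Real.rpow_mul (abs_nonneg _)]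
    norm_num
    rw [Real.rpow_neg_one]
  unfold gaussPdf
  rw [hdet, hquad, hscal]; ring

lemma inv_fromBlocks_diag {P : Matrix κ κ ℝ} {Q : Matrix ι ι ℝ}
    (hP : IsUnit P.det) (hQ : IsUnit Q.det) :
    (Matrix.fromBlocks P 0 0 Q)⁻¹ = Matrix.fromBlocks P⁻¹ 0 0 Q⁻¹ := by
  apply Matrix.inv_eq_right_inv
  rw [Matrix.fromBlocks_multiply]
  simp only [Matrix.mul_zero, Matrix.zero_mul, add_zero, zero_add,
    Matrix.mul_nonsing_inv P hP, Matrix.mul_nonsing_inv Q hQ, Matrix.fromBlocks_one]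

lemma gaussPdf_fromBlocks {P : Matrix κ κ ℝ} {Q : Matrix ι ι ℝ}
    (hP : 0 < P.det) (hQ : 0 < Q.det) (u : κ → ℝ) (v : ι → ℝ) :
    gaussPdf (Matrix.fromBlocks P 0 0 Q) (Sum.elim u v) = gaussPdf P u * gaussPdf Q v := by
  have hPd := hP
  have hQd := hQ
  have hdet : (Matrix.fromBlocks P 0 0 Q).det = P.det * Q.det :=
    Matrix.det_fromBlocks_zero₂₁ P 0 Q
  have hinv := inv_fromBlocks_diag hPd.ne'.isUnit hQd.ne'.isUnit
  have hquad : (Sum.elim u v) ⬝ᵥ ((Matrix.fromBlocks P 0 0 Q)⁻¹ *ᵥ Sum.elim u v) =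
      u ⬝ᵥ (P⁻¹ *ᵥ u) + v ⬝ᵥ (Q⁻¹ *ᵥ v) := by
    rw [hinv, Matrix.fromBlocks_mulVec]
    simp only [Sum.elim_comp_inl, Sum.elim_comp_inr, Matrix.zero_mulVec, add_zero, zero_add]
    exact sumElim_dotProduct_sumElim u _ v _
  have hcard : (Fintype.card (κ ⊕ ι) : ℝ) = Fintype.card κ + Fintype.card ι := by
    rw [Fintype.card_sum]; push_cast; ring
  unfold gaussPdf
  rw [hdet, hquad, hcard]
  rw [Real.mul_rpow hPd.le hQd.le]
  have h2pi : (0:ℝ) < 2 * Real.pi := by positivity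
  have hconst : ((2 * Real.pi) ^ (-(((Fintype.card κ : ℝ) + (Fintype.card ι : ℝ))) / 2) : ℝ)
      = (2 * Real.pi) ^ (-(Fintype.card κ : ℝ) / 2) * (2 * Real.pi) ^ (-(Fintype.card ι : ℝ) / 2) := by
    rw [← Real.rpow_add h2pi]; ring_nf
  rw [hconst, mul_add, Real.exp_add]
  ring

lemma mulVec_ne_zero {B : Matrix ι ι ℝ} (hB : IsUnit B.det) {x : ι → ℝ} (hx : x ≠ 0) :
    B *ᵥ x ≠ 0 := by
  intro h
  apply hx
  have := congrArg (fun w => B⁻¹ *ᵥ w) h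
  simpa [Matrix.mulVec_mulVec, Matrix.nonsing_inv_mul B hB] using this

lemma posDef_conj {S : Matrix ι ι ℝ} (hS : S.PosDef) {B : Matrix ι ι ℝ} (hB : IsUnit B.det) :
    (B * S * Bᵀ).PosDef := by
  have hSsym : Sᵀ = S := hS.isHermitian.eq
  rw [Matrix.posDef_iff_dotProduct_mulVec]
  constructor
  · show (B * S * Bᵀ)ᴴ = _
    rw [Matrix.conjTranspose_eq_transpose_of_trivial]
    rw [Matrix.transpose_mul, Matrix.transpose_mul, Matrix.transpose_transpose, hSsym,
      Matrix.mul_assoc]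
  · intro x hx
    have hxB : Bᵀ *ᵥ x ≠ 0 := by
      apply mulVec_ne_zero _ hx
      rwa [Matrix.det_transpose]
    have := hS.dotProduct_mulVec_pos hxB
    simp only [star_trivial] at this ⊢
    calc x ⬝ᵥ ((B * S * Bᵀ) *ᵥ x) = (Bᵀ *ᵥ x) ⬝ᵥ (S *ᵥ (Bᵀ *ᵥ x)) := by
          rw [← Matrix.mulVec_mulVec, ← Matrix.mulVec_mulVec, Matrix.dotProduct_mulVec x B,
            ← Matrix.mulVec_transpose]
      _ > 0 := this

lemma posDef_diag_pos {S : Matrix ι ι ℝ} (hS : S.PosDef) (i : ι) : 0 < S i i := by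
  have := hS.dotProduct_mulVec_pos (x := Pi.single i 1) (by
    intro h
    have := congrFun h i
    simp at this)
  simpa [single_dotProduct, Matrix.mulVec_single] using this

lemma posDef_schur₁₁ {A : Matrix κ κ ℝ} {B : Matrix κ ι ℝ} {D : Matrix ι ι ℝ}
    (hA : A.PosDef) (hM : (Matrix.fromBlocks A B Bᵀ D).PosDef) :
    (D - Bᵀ * A⁻¹ * B).PosDef := by
  have hBT : Bᴴ = Bᵀ := Matrix.conjTranspose_eq_transpose_of_trivial B
  have hAT : Aᵀ = A := by
    have := hA.isHermitian.eq
    rwa [Matrix.conjTranspose_eq_transpose_of_trivial] at this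
  haveI : Invertible A := A.invertibleOfIsUnitDet hA.det_pos.ne'.isUnit
  have hDsym : Dᵀ = D := by
    have h := hM.isHermitian.eq
    rw [Matrix.conjTranspose_eq_transpose_of_trivial, Matrix.fromBlocks_transpose] at h
    have := congrArg Matrix.toBlocks₂₂ h
    simpa [Matrix.toBlocks_fromBlocks₂₂] using this
  rw [Matrix.posDef_iff_dotProduct_mulVec]
  constructor
  · show (D - Bᵀ * A⁻¹ * B)ᴴ = _
    rw [Matrix.conjTranspose_eq_transpose_of_trivial, Matrix.transpose_sub, hDsym,
      Matrix.transpose_mul, Matrix.transpose_mul, Matrix.transpose_transpose,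
      Matrix.transpose_nonsing_inv, hAT, Matrix.mul_assoc]
  · intro y hy
    set x : κ → ℝ := -((A⁻¹ * B) *ᵥ y) with hxdef
    have hv : Sum.elim x y ≠ 0 := by
      intro h
      apply hy
      funext i
      have := congrFun h (Sum.inr i)
      simpa using this
    have hpos := hM.dotProduct_mulVec_pos hv
    rw [Matrix.dotProduct_mulVec] at hpos
    have hschur := Matrix.schur_complement_eq₁₁ (α := ℝ) B D x y hA.isHermitian
    rw [hBT] at hschur
    rw [hschur] at hpos
    simp only [hxdef, star_trivial, neg_add_cancel, Matrix.zero_vecMul,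
      zero_dotProduct, zero_add] at hpos
    rwa [← Matrix.dotProduct_mulVec] at hpos

lemma posDef_schur₂₂ {A : Matrix κ κ ℝ} {B : Matrix κ ι ℝ} {D : Matrix ι ι ℝ}
    (hD : D.PosDef) (hM : (Matrix.fromBlocks A B Bᵀ D).PosDef) :
    (A - B * D⁻¹ * Bᵀ).PosDef := by
  have hBT : Bᴴ = Bᵀ := Matrix.conjTranspose_eq_transpose_of_trivial B
  have hDT : Dᵀ = D := by
    have := hD.isHermitian.eq
    rwa [Matrix.conjTranspose_eq_transpose_of_trivial] at this
  haveI : Invertible D := D.invertibleOfIsUnitDet hD.det_pos.ne'.isUnit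
  have hAsym : Aᵀ = A := by
    have h := hM.isHermitian.eq
    rw [Matrix.conjTranspose_eq_transpose_of_trivial, Matrix.fromBlocks_transpose] at h
    have := congrArg Matrix.toBlocks₁₁ h
    simpa [Matrix.toBlocks_fromBlocks₁₁] using this
  rw [Matrix.posDef_iff_dotProduct_mulVec]
  constructor
  · show (A - B * D⁻¹ * Bᵀ)ᴴ = _
    rw [Matrix.conjTranspose_eq_transpose_of_trivial, Matrix.transpose_sub, hAsym,
      Matrix.transpose_mul, Matrix.transpose_mul, Matrix.transpose_transpose,
      Matrix.transpose_nonsing_inv, hDT, Matrix.mul_assoc]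
  · intro x hx
    set y : ι → ℝ := -((D⁻¹ * Bᵀ) *ᵥ x) with hydef
    have hv : Sum.elim x y ≠ 0 := by
      intro h
      apply hx
      funext i
      have := congrFun h (Sum.inl i)
      simpa using this
    have hpos := hM.dotProduct_mulVec_pos hv
    rw [Matrix.dotProduct_mulVec] at hpos
    have hschur := Matrix.schur_complement_eq₂₂ (α := ℝ) A B x y hD.isHermitian
    rw [hBT] at hschur
    rw [hschur] at hpos
    simp only [hydef, star_trivial, add_neg_cancel, neg_add_cancel, Matrix.zero_vecMul,
      zero_dotProduct, zero_add] at hpos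
    rwa [← Matrix.dotProduct_mulVec] at hpos

lemma measurable_mulVec_add (Q : Matrix ι ι ℝ) (b : ι → ℝ) :
    Measurable (fun x : ι → ℝ => Q *ᵥ x + b) := by
  have : Continuous (fun x : ι → ℝ => Q *ᵥ x + b) := by
    have h1 : Continuous (Matrix.toLin' Q) := LinearMap.continuous_on_pi _
    have : (fun x : ι → ℝ => Q *ᵥ x + b) = (fun y => y + b) ∘ (Matrix.toLin' Q) := by
      funext x; simp [Matrix.toLin'_apply]
    rw [this]
    exact (continuous_id.add continuous_const).comp h1
  exact this.measurable

lemma map_mulVec_add_volume (Q : Matrix ι ι ℝ) (hQ : Q.det ≠ 0) (b : ι → ℝ) :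
    Measure.map (fun x : ι → ℝ => Q *ᵥ x + b) volume
      = ENNReal.ofReal |Q.det⁻¹| • volume := by
  have h1 : (fun x : ι → ℝ => Q *ᵥ x + b) = (fun y => y + b) ∘ (Matrix.toLin' Q) := by
    funext x; simp [Matrix.toLin'_apply]
  rw [h1, ← Measure.map_map (measurable_add_const b)
    (LinearMap.continuous_on_pi (Matrix.toLin' Q)).measurable,
    Real.map_matrix_volume_pi_eq_smul_volume_pi hQ, Measure.map_smul,
    map_add_right_eq_self volume b, abs_inv]

lemma integral_comp_mulVec_add {f : (ι → ℝ) → ℝ} (hf : AEStronglyMeasurable f volume)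
    (Q : Matrix ι ι ℝ) (hQ : Q.det ≠ 0) (b : ι → ℝ) :
    ∫ x, f (Q *ᵥ x + b) = |Q.det|⁻¹ * ∫ x, f x := by
  have hmap := map_mulVec_add_volume Q hQ b
  have hf' : AEStronglyMeasurable f (Measure.map (fun x : ι → ℝ => Q *ᵥ x + b) volume) := by
    rw [hmap]
    exact hf.mono_ac (Measure.smul_absolutelyContinuous)
  rw [← integral_map (measurable_mulVec_add Q b).aemeasurable hf', hmap,
    integral_smul_measure, ENNReal.toReal_ofReal (abs_nonneg _), abs_inv, smul_eq_mul]

lemma integrable_comp_mulVec_add {f : (ι → ℝ) → ℝ} (hfi : Integrable f)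
    (Q : Matrix ι ι ℝ) (hQ : Q.det ≠ 0) (b : ι → ℝ) :
    Integrable (fun x => f (Q *ᵥ x + b)) := by
  have hmap := map_mulVec_add_volume Q hQ b
  have hf' : AEStronglyMeasurable f (Measure.map (fun x : ι → ℝ => Q *ᵥ x + b) volume) := by
    rw [hmap]
    exact hfi.aestronglyMeasurable.mono_ac (Measure.smul_absolutelyContinuous)
  have : Integrable f (Measure.map (fun x : ι → ℝ => Q *ᵥ x + b) volume) := by
    rw [hmap]
    apply (integrable_smul_measure _ ENNReal.ofReal_ne_top).mpr hfi
    simp only [ne_eq, ENNReal.ofReal_eq_zero, not_le, abs_pos]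
    exact inv_ne_zero hQ
  exact (integrable_map_measure hf' (measurable_mulVec_add Q b).aemeasurable).mp this

lemma integrable_gaussPdf {S : Matrix ι ι ℝ} (hS : S.PosDef) : Integrable (gaussPdf S) := by
  have hSi : S⁻¹.PosDef := hS.inv
  obtain ⟨T, hTT, hTsym⟩ : ∃ T : Matrix ι ι ℝ, T * T = S⁻¹ ∧ Tᵀ = T := by
    open scoped MatrixOrder in
    exact ⟨CFC.sqrt S⁻¹, CFC.sqrt_mul_sqrt_self _ hSi.posSemidef.nonneg, by
      have := (CFC.sqrt_nonneg S⁻¹).posSemidef.isHermitian.eq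
      rwa [Matrix.conjTranspose_eq_transpose_of_trivial] at this⟩
  have hTdet : T.det ≠ 0 := by
    intro h
    have : (S⁻¹).det = 0 := by rw [← hTT, Matrix.det_mul, h, mul_zero]
    exact hSi.det_pos.ne' this
  set F : (ι → ℝ) → ℝ := fun x => ∏ i, Real.exp (-(1/2) * (x i * x i)) with hF
  have hFint : Integrable F := by
    apply Integrable.fintype_prod (f := fun _ (t : ℝ) => Real.exp (-(1/2) * (t * t)))
    intro i
    have := integrable_exp_neg_mul_sq (b := (1/2 : ℝ)) (by norm_num)
    apply this.congr
    filter_upwards with t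
    rw [neg_mul, neg_mul, sq]
  have hkey : ∀ z, gaussPdf S z
      = (2 * Real.pi) ^ (-(Fintype.card ι : ℝ) / 2) * S.det ^ (-(1:ℝ) / 2) * F (T *ᵥ z + 0) := by
    intro z
    unfold gaussPdf
    congr 1
    rw [add_zero, hF]
    have hq : z ⬝ᵥ (S⁻¹ *ᵥ z) = (T *ᵥ z) ⬝ᵥ (T *ᵥ z) := by
      rw [← hTT, ← Matrix.mulVec_mulVec, Matrix.dotProduct_mulVec, ← Matrix.mulVec_transpose,
        hTsym]
    rw [hq]
    rw [dotProduct, Finset.mul_sum, Real.exp_sum]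
  have : Integrable (fun z => (2 * Real.pi) ^ (-(Fintype.card ι : ℝ) / 2) * S.det ^ (-(1:ℝ) / 2)
      * F (T *ᵥ z + 0)) := by
    exact (integrable_comp_mulVec_add hFint T hTdet 0).const_mul _
  exact this.congr (by filter_upwards with z using (hkey z).symm)

lemma measurableSet_posSet (a : ι → ℝ) : MeasurableSet {y : ι → ℝ | ∀ i, 0 < y i + a i} := by
  have : {y : ι → ℝ | ∀ i, 0 < y i + a i} = ⋂ i, {y : ι → ℝ | 0 < y i + a i} := by
    ext y; simp
  rw [this]
  exact MeasurableSet.iInter fun i =>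
    measurableSet_lt measurable_const ((measurable_pi_apply i).add_const _)

lemma measurableSet_leSet (a : ι → ℝ) : MeasurableSet {u : ι → ℝ | ∀ i, u i ≤ a i} := by
  have : {u : ι → ℝ | ∀ i, u i ≤ a i} = ⋂ i, {u : ι → ℝ | u i ≤ a i} := by
    ext y; simp
  rw [this]
  exact MeasurableSet.iInter fun i =>
    measurableSet_le (measurable_pi_apply i) measurable_const

lemma measurableSet_ltSet (a : ι → ℝ) : MeasurableSet {u : ι → ℝ | ∀ i, u i < a i} := by
  have : {u : ι → ℝ | ∀ i, u i < a i} = ⋂ i, {u : ι → ℝ | u i < a i} := by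
    ext y; simp
  rw [this]
  exact MeasurableSet.iInter fun i =>
    measurableSet_lt (measurable_pi_apply i) measurable_const

lemma volume_section (i : ι) (c : ℝ) : (volume {u : ι → ℝ | u i = c}) = 0 := by
  have : {u : ι → ℝ | u i = c} = Set.pi Set.univ (fun j => if j = i then {c} else Set.univ) := by
    ext u; simp only [Set.mem_setOf_eq, Set.mem_pi, Set.mem_univ, forall_true_left]
    constructor
    · intro h j; by_cases hj : j = i <;> simp [hj, h]
    · intro h; have := h i; simpa using this
  rw [this, volume_pi_pi]
  exact Finset.prod_eq_zero (Finset.mem_univ i) (by simp)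

lemma lt_ae_le (a : ι → ℝ) :
    ({u : ι → ℝ | ∀ i, u i < a i} : Set (ι → ℝ)) =ᵐ[volume] {u : ι → ℝ | ∀ i, u i ≤ a i} := by
  rw [MeasureTheory.ae_eq_set]
  constructor
  · have : {u : ι → ℝ | ∀ i, u i < a i} \ {u : ι → ℝ | ∀ i, u i ≤ a i} = ∅ := by
      rw [Set.diff_eq_empty]
      intro u hu i
      exact (hu i).le
    rw [this, measure_empty]
  · apply measure_mono_null (t := ⋃ i, {u : ι → ℝ | u i = a i})
      (fun u hu => by
        obtain ⟨hle, hlt⟩ := hu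
        simp only [Set.mem_setOf_eq] at hle hlt
        push_neg at hlt
        obtain ⟨i, hi⟩ := hlt
        exact Set.mem_iUnion.mpr ⟨i, le_antisymm (hle i) hi⟩)
    exact measure_iUnion_null fun i => volume_section i (a i)

lemma setIntegral_gauss_shift (S : Matrix ι ι ℝ) (a m : ι → ℝ) :
    ∫ y in {y : ι → ℝ | ∀ i, 0 < y i + a i}, gaussPdf S (y - m) = gaussCdf S (a + m) := by
  set c : ι → ℝ := a + m with hc
  set F : (ι → ℝ) → ℝ := Set.indicator {u : ι → ℝ | ∀ i, u i < c i} (gaussPdf S) with hFdef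
  have key : ∀ y : ι → ℝ,
      Set.indicator {y : ι → ℝ | ∀ i, 0 < y i + a i} (fun y => gaussPdf S (y - m)) y
        = F (-(y + -m)) := by
    intro y
    rw [hFdef]
    by_cases hy : ∀ i, 0 < y i + a i
    · rw [Set.indicator_of_mem (show y ∈ {y : ι → ℝ | ∀ i, 0 < y i + a i} from hy),
        Set.indicator_of_mem, ← sub_eq_add_neg, gaussPdf_neg]
      intro i
      simp only [hc, Pi.neg_apply, Pi.add_apply]
      have := hy i
      linarith
    · rw [Set.indicator_of_notMem (show y ∉ {y : ι → ℝ | ∀ i, 0 < y i + a i} from hy),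
        Set.indicator_of_notMem]
      intro hmem
      apply hy
      intro i
      have := hmem i
      simp only [hc, Pi.neg_apply, Pi.add_apply] at this
      linarith
  rw [← integral_indicator (measurableSet_posSet a)]
  calc ∫ y, Set.indicator {y : ι → ℝ | ∀ i, 0 < y i + a i} (fun y => gaussPdf S (y - m)) y
      = ∫ y, F (-(y + -m)) := by exact integral_congr_ae (by filter_upwards with y using key y)
    _ = ∫ y, F (-y) := integral_add_right_eq_self (fun y => F (-y)) (-m)
    _ = ∫ y, F y := integral_neg_eq_self F volume
    _ = ∫ u in {u : ι → ℝ | ∀ i, u i < c i}, gaussPdf S u :=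
        integral_indicator (measurableSet_ltSet c)
    _ = ∫ u in {u : ι → ℝ | ∀ i, u i ≤ c i}, gaussPdf S u := by
        apply setIntegral_congr_set (lt_ae_le c)
    _ = gaussCdf S c := rfl

lemma measurable_mulVec (A : Matrix ι κ ℝ) : Measurable (fun y : κ → ℝ => A *ᵥ y) := by
  apply measurable_pi_lambda
  intro i
  show Measurable fun y : κ → ℝ => A i ⬝ᵥ y
  unfold dotProduct
  exact Finset.measurable_sum _ fun j _ => (measurable_pi_apply j).const_mul _

lemma gauss_joint₁ {Ob : Matrix ι ι ℝ} {Ga : Matrix κ κ ℝ} {De : Matrix ι κ ℝ}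
    (hGa : Ga.PosDef) (hK : 0 < (Ob - De * Ga⁻¹ * Deᵀ).det)
    (y : κ → ℝ) (x : ι → ℝ) :
    gaussPdf (Matrix.fromBlocks Ga Deᵀ De Ob) (Sum.elim y x)
      = gaussPdf (Ob - De * Ga⁻¹ * Deᵀ) (x - (De * Ga⁻¹) *ᵥ y) * gaussPdf Ga y := by
  set A : Matrix ι κ ℝ := De * Ga⁻¹ with hA
  set K : Matrix ι ι ℝ := Ob - De * Ga⁻¹ * Deᵀ with hKdef
  set L : Matrix (κ ⊕ ι) (κ ⊕ ι) ℝ := Matrix.fromBlocks 1 0 A 1 with hL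
  have hGaU : IsUnit Ga.det := hGa.det_pos.ne'.isUnit
  have hGaInvT : (Ga⁻¹)ᵀ = Ga⁻¹ := by
    rw [Matrix.transpose_nonsing_inv]
    congr 1
    have := hGa.isHermitian.eq
    rwa [Matrix.conjTranspose_eq_transpose_of_trivial] at this
  have hAT : Aᵀ = Ga⁻¹ * Deᵀ := by rw [hA, Matrix.transpose_mul, hGaInvT]
  have h1 : Ga * Aᵀ = Deᵀ := by
    rw [hAT, ← Matrix.mul_assoc, Matrix.mul_nonsing_inv Ga hGaU, Matrix.one_mul]
  have h2 : A * Ga = De := by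
    rw [hA, Matrix.mul_assoc, Matrix.nonsing_inv_mul Ga hGaU, Matrix.mul_one]
  have h3 : De * Aᵀ + K = Ob := by
    rw [hAT, ← Matrix.mul_assoc, hKdef, add_sub_cancel]
  have hLdet : L.det = 1 := by
    rw [hL, Matrix.det_fromBlocks_zero₁₂, Matrix.det_one, Matrix.det_one, mul_one]
  have hLT : Lᵀ = Matrix.fromBlocks 1 Aᵀ 0 1 := by
    rw [hL, Matrix.fromBlocks_transpose, Matrix.transpose_one, Matrix.transpose_one,
      Matrix.transpose_zero]
  have hMeq : Matrix.fromBlocks Ga Deᵀ De Ob = L * Matrix.fromBlocks Ga 0 0 K * Lᵀ := by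
    rw [hLT, hL, Matrix.fromBlocks_multiply, Matrix.fromBlocks_multiply]
    simp only [Matrix.mul_one, Matrix.mul_zero, Matrix.zero_mul, add_zero, zero_add,
      Matrix.one_mul]
    rw [h1, h2, h3]
  have hvec : Sum.elim y x = L *ᵥ Sum.elim y (x - A *ᵥ y) := by
    rw [hL, Matrix.fromBlocks_mulVec]
    simp only [Sum.elim_comp_inl, Sum.elim_comp_inr, Matrix.one_mulVec, Matrix.zero_mulVec,
      add_zero, zero_add]
    rw [add_sub_cancel]
  have hDdet : 0 < (Matrix.fromBlocks Ga 0 0 K).det := by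
    rw [Matrix.det_fromBlocks_zero₂₁]
    exact mul_pos hGa.det_pos hK
  rw [hMeq, hvec, gaussPdf_mulVec L hDdet (by rw [hLdet]; exact isUnit_one), hLdet,
    gaussPdf_fromBlocks hGa.det_pos hK]
  simp only [abs_one, inv_one, one_mul]
  ring

lemma gauss_joint₂ {Ob : Matrix ι ι ℝ} {Ga : Matrix κ κ ℝ} {De : Matrix ι κ ℝ}
    (hOb : Ob.PosDef) (hC : 0 < (Ga - Deᵀ * Ob⁻¹ * De).det)
    (y : κ → ℝ) (x : ι → ℝ) :
    gaussPdf (Matrix.fromBlocks Ga Deᵀ De Ob) (Sum.elim y x)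
      = gaussPdf (Ga - Deᵀ * Ob⁻¹ * De) (y - (Deᵀ * Ob⁻¹) *ᵥ x) * gaussPdf Ob x := by
  set B : Matrix κ ι ℝ := Deᵀ * Ob⁻¹ with hB
  set C : Matrix κ κ ℝ := Ga - Deᵀ * Ob⁻¹ * De with hCdef
  set L : Matrix (κ ⊕ ι) (κ ⊕ ι) ℝ := Matrix.fromBlocks 1 B 0 1 with hL
  have hObU : IsUnit Ob.det := hOb.det_pos.ne'.isUnit
  have hObInvT : (Ob⁻¹)ᵀ = Ob⁻¹ := by
    rw [Matrix.transpose_nonsing_inv]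
    congr 1
    have := hOb.isHermitian.eq
    rwa [Matrix.conjTranspose_eq_transpose_of_trivial] at this
  have hBT : Bᵀ = Ob⁻¹ * De := by
    rw [hB, Matrix.transpose_mul, hObInvT, Matrix.transpose_transpose]
  have h1 : B * Ob = Deᵀ := by
    rw [hB, Matrix.mul_assoc, Matrix.nonsing_inv_mul Ob hObU, Matrix.mul_one]
  have h2 : Ob * Bᵀ = De := by
    rw [hBT, ← Matrix.mul_assoc, Matrix.mul_nonsing_inv Ob hObU, Matrix.one_mul]
  have h3 : C + Deᵀ * Bᵀ = Ga := by
    rw [hBT, ← Matrix.mul_assoc, hCdef, sub_add_cancel]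
  have hLdet : L.det = 1 := by
    rw [hL, Matrix.det_fromBlocks_zero₂₁, Matrix.det_one, Matrix.det_one, mul_one]
  have hLT : Lᵀ = Matrix.fromBlocks 1 0 Bᵀ 1 := by
    rw [hL, Matrix.fromBlocks_transpose, Matrix.transpose_one, Matrix.transpose_one,
      Matrix.transpose_zero]
  have hMeq : Matrix.fromBlocks Ga Deᵀ De Ob = L * Matrix.fromBlocks C 0 0 Ob * Lᵀ := by
    rw [hLT, hL, Matrix.fromBlocks_multiply, Matrix.fromBlocks_multiply]
    simp only [Matrix.mul_one, Matrix.mul_zero, Matrix.zero_mul, add_zero, zero_add,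
      Matrix.one_mul]
    rw [h1, h2, h3]
  have hvec : Sum.elim y x = L *ᵥ Sum.elim (y - B *ᵥ x) x := by
    rw [hL, Matrix.fromBlocks_mulVec]
    simp only [Sum.elim_comp_inl, Sum.elim_comp_inr, Matrix.one_mulVec, Matrix.zero_mulVec,
      add_zero, zero_add]
    rw [sub_add_cancel]
  have hDdet : 0 < (Matrix.fromBlocks C 0 0 Ob).det := by
    rw [Matrix.det_fromBlocks_zero₂₁]
    exact mul_pos hC hOb.det_pos
  rw [hMeq, hvec, gaussPdf_mulVec L hDdet (by rw [hLdet]; exact isUnit_one), hLdet,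
    gaussPdf_fromBlocks hC hOb.det_pos]
  simp only [abs_one, inv_one, one_mul]

/-- Additive representation of the unified skew-normal (equation (6)): the conditional law
of `ξ + D_Ω (r₀ + Δ Γ⁻¹ r₁)` given `{r₁ + γ > 0}` has the SUN density, stated via
expectations of bounded measurable test functions against the joint density of the
independent vectors `r₀ ~ φ_p(·; Ω̄ − Δ Γ⁻¹ Δᵀ)` and `r₁ ~ φ_s(·; Γ)`. -/
theorem sun_additive_representation
    {s p : ℕ} (hs : 0 < s) (hp : 0 < p)
    (xi : Fin p → ℝ) (Om : Matrix (Fin p) (Fin p) ℝ) (hOm : Om.PosDef)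
    (De : Matrix (Fin p) (Fin s) ℝ) (ga : Fin s → ℝ)
    (Ga : Matrix (Fin s) (Fin s) ℝ) (hGa : Ga.PosDef)
    (hM : (Matrix.fromBlocks Ga Deᵀ De (corrMat Om)).PosDef)
    (g : (Fin p → ℝ) → ℝ) (hgm : Measurable g) (hgb : ∃ Cb, ∀ x, |g x| ≤ Cb) :
    (∫ r1 in {r1 : Fin s → ℝ | ∀ i, r1 i + ga i > 0},
        ∫ r0 : Fin p → ℝ,
          g (xi + dMat Om *ᵥ (r0 + (De * Ga⁻¹) *ᵥ r1)) *
            gaussPdf (corrMat Om - De * Ga⁻¹ * Deᵀ) r0 * gaussPdf Ga r1) /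
      (∫ r1 in {r1 : Fin s → ℝ | ∀ i, r1 i + ga i > 0}, gaussPdf Ga r1) =
    ∫ z : Fin p → ℝ, g z * sunPdf xi Om De ga Ga z := by
  obtain ⟨Cb, hCb⟩ := hgb
  have hCb0 : 0 ≤ Cb := le_trans (abs_nonneg _) (hCb 0)
  -- notation
  set D : Matrix (Fin p) (Fin p) ℝ := dMat Om with hD
  set Di : Matrix (Fin p) (Fin p) ℝ := D⁻¹ with hDi
  set Ob : Matrix (Fin p) (Fin p) ℝ := corrMat Om with hOb'
  set A : Matrix (Fin p) (Fin s) ℝ := De * Ga⁻¹ with hA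
  set K : Matrix (Fin p) (Fin p) ℝ := Ob - De * Ga⁻¹ * Deᵀ with hK'
  set B : Matrix (Fin s) (Fin p) ℝ := Deᵀ * Ob⁻¹ with hB
  set C : Matrix (Fin s) (Fin s) ℝ := Ga - Deᵀ * Ob⁻¹ * De with hC'
  simp only [gt_iff_lt]
  set E : Set (Fin s → ℝ) := {r1 : Fin s → ℝ | ∀ i, 0 < r1 i + ga i} with hE
  have hEmeas : MeasurableSet E := measurableSet_posSet ga
  -- basic facts about D
  have hdiag : ∀ i, 0 < Om i i := fun i => posDef_diag_pos hOm i
  have hDdetpos : 0 < D.det := by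
    rw [hD]
    unfold dMat
    rw [Matrix.det_diagonal]
    exact Finset.prod_pos fun i _ => Real.sqrt_pos.mpr (hdiag i)
  have hDu : IsUnit D.det := hDdetpos.ne'.isUnit
  have hDT : Dᵀ = D := by rw [hD]; unfold dMat; exact Matrix.diagonal_transpose _
  have hDiT : Diᵀ = Di := by rw [hDi, Matrix.transpose_nonsing_inv, hDT]
  have hDidet : Di.det ≠ 0 := by
    rw [hDi, Matrix.det_nonsing_inv, Ring.inverse_eq_inv']
    exact inv_ne_zero hDdetpos.ne'
  have hDiD : ∀ v : Fin p → ℝ, Di *ᵥ (D *ᵥ v) = v := by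
    intro v
    rw [Matrix.mulVec_mulVec, hDi, Matrix.nonsing_inv_mul D hDu, Matrix.one_mulVec]
  have hDDi : ∀ v : Fin p → ℝ, D *ᵥ (Di *ᵥ v) = v := by
    intro v
    rw [Matrix.mulVec_mulVec, hDi, Matrix.mul_nonsing_inv D hDu, Matrix.one_mulVec]
  -- positive definiteness
  have hDiu : IsUnit Di.det := isUnit_iff_ne_zero.mpr hDidet
  have hObPD : Ob.PosDef := by
    have h : Ob = Di * Om * Diᵀ := by
      rw [hDiT, hOb']
      unfold corrMat
      rw [hDi, hD]
    rw [h]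
    exact posDef_conj hOm hDiu
  have hMT : (Matrix.fromBlocks Ga Deᵀ (Deᵀ)ᵀ Ob).PosDef := by
    rwa [Matrix.transpose_transpose]
  have hKPD : K.PosDef := by
    have := posDef_schur₁₁ hGa hMT
    rwa [Matrix.transpose_transpose] at this
  have hCPD : C.PosDef := by
    have := posDef_schur₂₂ hObPD hMT
    rwa [Matrix.transpose_transpose] at this
  have hOmEq : D * Ob * Dᵀ = Om := by
    rw [hDT, hOb']
    unfold corrMat
    rw [← hD, ← hDi, ← Matrix.mul_assoc, ← Matrix.mul_assoc,
      Matrix.mul_nonsing_inv D hDu, Matrix.one_mul, Matrix.mul_assoc,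
      Matrix.nonsing_inv_mul D hDu, Matrix.mul_one]
  -- integrability of gaussians
  have hKint : Integrable (gaussPdf K) := integrable_gaussPdf hKPD
  -- the indicator weight
  set eE : (Fin s → ℝ) → ℝ := E.indicator (fun _ => (1:ℝ)) with heE
  have heE_mem : ∀ {y}, y ∈ E → eE y = 1 := fun hy => Set.indicator_of_mem hy _
  have heE_not : ∀ {y}, y ∉ E → eE y = 0 := fun hy => Set.indicator_of_notMem hy _
  have heE_meas : Measurable eE := (measurable_const.indicator hEmeas)
  have heE_bd : ∀ y, 0 ≤ eE y ∧ eE y ≤ 1 := by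
    intro y
    by_cases hy : y ∈ E
    · rw [heE_mem hy]; norm_num
    · rw [heE_not hy]; norm_num
  -- affine shift
  set w0 : Fin p → ℝ := -(Di *ᵥ xi) with hw0
  -- the double integrand
  set W : (Fin s → ℝ) → (Fin p → ℝ) → ℝ := fun y z =>
    (g z * gaussPdf K (Di *ᵥ z + (w0 - A *ᵥ y))) * (eE y * (|D.det|⁻¹ * gaussPdf Ga y))
    with hW
  -- measurability of inner function
  have haff_meas : ∀ y : Fin s → ℝ, Measurable (fun z => Di *ᵥ z + (w0 - A *ᵥ y)) :=
    fun y => measurable_mulVec_add Di (w0 - A *ᵥ y)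
  have hy_meas : ∀ y : Fin s → ℝ,
      AEStronglyMeasurable (fun z => g z * gaussPdf K (Di *ᵥ z + (w0 - A *ᵥ y))) volume := by
    intro y
    exact (hgm.mul (((continuous_gaussPdf K).measurable).comp (haff_meas y))).aestronglyMeasurable
  -- the inner integrand is integrable in z for each y
  have hinner_int : ∀ y : Fin s → ℝ,
      Integrable (fun z => g z * gaussPdf K (Di *ᵥ z + (w0 - A *ᵥ y))) := by
    intro y
    have h1 : Integrable (fun z => gaussPdf K (Di *ᵥ z + (w0 - A *ᵥ y))) :=
      integrable_comp_mulVec_add hKint Di hDidet _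
    have h2 := h1.bdd_mul hgm.aestronglyMeasurable
      (Filter.Eventually.of_forall fun z => by rw [Real.norm_eq_abs]; exact hCb z)
    exact h2
  -- measurability of W as a function on the product space
  have hWm : Measurable (fun q : (Fin s → ℝ) × (Fin p → ℝ) => W q.1 q.2) := by
    have harg : Measurable (fun q : (Fin s → ℝ) × (Fin p → ℝ) =>
        Di *ᵥ q.2 + (w0 - A *ᵥ q.1)) :=
      ((measurable_mulVec Di).comp measurable_snd).add
        (measurable_const.sub ((measurable_mulVec A).comp measurable_fst))
    exact ((hgm.comp measurable_snd).mul
      (((continuous_gaussPdf K).measurable).comp harg)).mul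
      ((heE_meas.comp measurable_fst).mul
        ((((continuous_gaussPdf Ga).measurable).comp measurable_fst).const_mul _))
  -- the integral of gaussPdf K
  set IK : ℝ := ∫ z, gaussPdf K z with hIK
  have hIK0 : 0 ≤ IK := integral_nonneg fun z => gaussPdf_nonneg hKPD.det_pos.le z
  have hKnn : ∀ v, 0 ≤ gaussPdf K v := gaussPdf_nonneg hKPD.det_pos.le
  have hGann : ∀ v, 0 ≤ gaussPdf Ga v := gaussPdf_nonneg hGa.det_pos.le
  have hObnn : ∀ v, 0 ≤ gaussPdf Ob v := gaussPdf_nonneg hObPD.det_pos.le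
  -- Integrability of W on the product space
  have hWint : Integrable (fun q : (Fin s → ℝ) × (Fin p → ℝ) => W q.1 q.2)
      ((volume : Measure (Fin s → ℝ)).prod (volume : Measure (Fin p → ℝ))) := by
    rw [MeasureTheory.integrable_prod_iff (hWm.aestronglyMeasurable)]
    constructor
    · filter_upwards with y
      exact (hinner_int y).mul_const _
    · -- bound the inner norm integral
      have hbd : ∀ y : Fin s → ℝ, (∫ z, ‖W y z‖)
          ≤ (Cb * (|Di.det|⁻¹ * IK)) * (eE y * (|D.det|⁻¹ * gaussPdf Ga y)) := by
        intro y
        have hrhs_int : Integrable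
            (fun z => (Cb * gaussPdf K (Di *ᵥ z + (w0 - A *ᵥ y)))
              * (eE y * (|D.det|⁻¹ * gaussPdf Ga y))) :=
          (((integrable_comp_mulVec_add hKint Di hDidet _).const_mul Cb).mul_const _)
        have hmono : (∫ z, ‖W y z‖)
            ≤ ∫ z, (Cb * gaussPdf K (Di *ᵥ z + (w0 - A *ᵥ y)))
              * (eE y * (|D.det|⁻¹ * gaussPdf Ga y)) := by
          apply integral_mono ((hinner_int y).mul_const _).norm hrhs_int
          intro z
          have h1 : 0 ≤ eE y * (|D.det|⁻¹ * gaussPdf Ga y) := by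
            have := (heE_bd y).1
            have := hGann y
            positivity
          show ‖(g z * gaussPdf K (Di *ᵥ z + (w0 - A *ᵥ y)))
            * (eE y * (|D.det|⁻¹ * gaussPdf Ga y))‖ ≤ _
          simp only [norm_mul, Real.norm_eq_abs]
          rw [abs_of_nonneg (hKnn _), abs_of_nonneg (heE_bd y).1, abs_of_nonneg (hGann y),
            abs_of_nonneg (inv_nonneg.mpr (abs_nonneg D.det))]
          apply mul_le_mul_of_nonneg_right _ h1
          exact mul_le_mul_of_nonneg_right (hCb z) (hKnn _)
        calc (∫ z, ‖W y z‖) ≤ _ := hmono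
          _ = (Cb * (|Di.det|⁻¹ * IK)) * (eE y * (|D.det|⁻¹ * gaussPdf Ga y)) := by
            rw [integral_mul_const, integral_const_mul,
              integral_comp_mulVec_add (continuous_gaussPdf K).measurable.aestronglyMeasurable
                Di hDidet _, ← hIK]
      have hdom_int : Integrable (fun y =>
          (Cb * (|Di.det|⁻¹ * IK)) * (eE y * (|D.det|⁻¹ * gaussPdf Ga y))) := by
        have h1 : Integrable (fun y => eE y * (|D.det|⁻¹ * gaussPdf Ga y)) := by
          apply Integrable.bdd_mul ((integrable_gaussPdf hGa).const_mul _)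
            heE_meas.aestronglyMeasurable
          exact Filter.Eventually.of_forall fun y => by
            rw [Real.norm_eq_abs, abs_of_nonneg (heE_bd y).1]; exact (heE_bd y).2
        exact h1.const_mul _
      apply Integrable.mono hdom_int
      · exact (hWm.norm.aestronglyMeasurable).integral_prod_right'
      · filter_upwards with y
        rw [Real.norm_eq_abs, Real.norm_eq_abs]
        have h0 : 0 ≤ ∫ z, ‖W y z‖ := integral_nonneg fun z => norm_nonneg _
        have hb0 : 0 ≤ (Cb * (|Di.det|⁻¹ * IK)) * (eE y * (|D.det|⁻¹ * gaussPdf Ga y)) := by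
          have := (heE_bd y).1
          have := hGann y
          positivity
        rw [abs_of_nonneg h0, abs_of_nonneg hb0]
        exact hbd y
  -- Step 1: numerator as a double integral of W
  have hNum1 : (∫ r1 in E,
      ∫ r0 : Fin p → ℝ, g (xi + D *ᵥ (r0 + A *ᵥ r1)) * gaussPdf K r0 * gaussPdf Ga r1)
      = ∫ y, ∫ z, W y z := by
    rw [← integral_indicator hEmeas]
    apply integral_congr_ae
    filter_upwards with y
    by_cases hy : y ∈ E
    · rw [Set.indicator_of_mem hy]
      have hchange : (∫ r0 : Fin p → ℝ, g (xi + D *ᵥ (r0 + A *ᵥ y)) * gaussPdf K r0)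
          = |D.det|⁻¹ * ∫ z, g z * gaussPdf K (Di *ᵥ z + (w0 - A *ᵥ y)) := by
        have hpt : ∀ r0 : Fin p → ℝ, g (xi + D *ᵥ (r0 + A *ᵥ y)) * gaussPdf K r0
            = (fun z => g z * gaussPdf K (Di *ᵥ z + (w0 - A *ᵥ y)))
              (D *ᵥ r0 + (xi + D *ᵥ (A *ᵥ y))) := by
          intro r0
          have h1 : xi + D *ᵥ (r0 + A *ᵥ y) = D *ᵥ r0 + (xi + D *ᵥ (A *ᵥ y)) := by
            rw [Matrix.mulVec_add]; abel
          have h2 : Di *ᵥ (D *ᵥ r0 + (xi + D *ᵥ (A *ᵥ y))) + (w0 - A *ᵥ y) = r0 := by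
            rw [Matrix.mulVec_add, Matrix.mulVec_add, hDiD, hDiD, hw0]; abel
          show _ = g (D *ᵥ r0 + (xi + D *ᵥ (A *ᵥ y)))
            * gaussPdf K (Di *ᵥ (D *ᵥ r0 + (xi + D *ᵥ (A *ᵥ y))) + (w0 - A *ᵥ y))
          rw [h2, ← h1]
        rw [integral_congr_ae (Filter.Eventually.of_forall hpt)]
        exact integral_comp_mulVec_add (hy_meas y) D hDdetpos.ne' _
      calc (∫ r0 : Fin p → ℝ, g (xi + D *ᵥ (r0 + A *ᵥ y)) * gaussPdf K r0 * gaussPdf Ga y)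
          = (∫ r0 : Fin p → ℝ, g (xi + D *ᵥ (r0 + A *ᵥ y)) * gaussPdf K r0) * gaussPdf Ga y :=
            integral_mul_const _ _
        _ = (|D.det|⁻¹ * ∫ z, g z * gaussPdf K (Di *ᵥ z + (w0 - A *ᵥ y))) * gaussPdf Ga y := by
            rw [hchange]
        _ = (∫ z, g z * gaussPdf K (Di *ᵥ z + (w0 - A *ᵥ y)))
              * (eE y * (|D.det|⁻¹ * gaussPdf Ga y)) := by
            rw [heE_mem hy]; ring
        _ = ∫ z, W y z := (integral_mul_const _ _).symm
    · rw [Set.indicator_of_notMem hy]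
      simp only [hW, heE_not hy, zero_mul, mul_zero, integral_zero]
  -- Step 2: Fubini
  have hNum2 : (∫ y, ∫ z, W y z) = ∫ z, ∫ y, W y z := by
    exact integral_integral_swap hWint
  -- Step 3: evaluate the inner y-integral
  have hNum3 : ∀ z : Fin p → ℝ, (∫ y, W y z)
      = g z * gaussPdf Om (z - xi) * gaussCdf C (ga + B *ᵥ (Di *ᵥ (z - xi))) := by
    intro z
    set x : Fin p → ℝ := Di *ᵥ (z - xi) with hx
    have haffeq : ∀ y : Fin s → ℝ, Di *ᵥ z + (w0 - A *ᵥ y) = x - A *ᵥ y := by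
      intro y
      rw [hx, Matrix.mulVec_sub, hw0]; abel
    have hswap : ∀ y : Fin s → ℝ, gaussPdf K (x - A *ᵥ y) * gaussPdf Ga y
        = gaussPdf C (y - B *ᵥ x) * gaussPdf Ob x :=
      fun y => (gauss_joint₁ hGa hKPD.det_pos y x).symm.trans (gauss_joint₂ hObPD hCPD.det_pos y x)
    have hWpt : ∀ y : Fin s → ℝ, W y z
        = (g z * (|D.det|⁻¹ * gaussPdf Ob x)) * (eE y * gaussPdf C (y - B *ᵥ x)) := by
      intro y
      rw [hW]
      show (g z * gaussPdf K (Di *ᵥ z + (w0 - A *ᵥ y)))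
          * (eE y * (|D.det|⁻¹ * gaussPdf Ga y)) = _
      rw [haffeq y]
      calc (g z * gaussPdf K (x - A *ᵥ y)) * (eE y * (|D.det|⁻¹ * gaussPdf Ga y))
          = g z * eE y * |D.det|⁻¹ * (gaussPdf K (x - A *ᵥ y) * gaussPdf Ga y) := by ring
        _ = g z * eE y * |D.det|⁻¹ * (gaussPdf C (y - B *ᵥ x) * gaussPdf Ob x) := by rw [hswap y]
        _ = (g z * (|D.det|⁻¹ * gaussPdf Ob x)) * (eE y * gaussPdf C (y - B *ᵥ x)) := by ring
    have hind : ∀ y : Fin s → ℝ, eE y * gaussPdf C (y - B *ᵥ x)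
        = E.indicator (fun y => gaussPdf C (y - B *ᵥ x)) y := by
      intro y
      by_cases hy : y ∈ E
      · rw [heE_mem hy, one_mul, Set.indicator_of_mem hy]
      · rw [heE_not hy, zero_mul, Set.indicator_of_notMem hy]
    have hOmPdf : gaussPdf Om (z - xi) = |D.det|⁻¹ * gaussPdf Ob x := by
      have h := gaussPdf_mulVec D hObPD.det_pos hDu x
      rw [hOmEq] at h
      rw [hx, hDDi (z - xi)] at h
      rw [← hx] at h
      exact h
    calc (∫ y, W y z)
        = ∫ y, (g z * (|D.det|⁻¹ * gaussPdf Ob x)) * (eE y * gaussPdf C (y - B *ᵥ x)) :=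
          integral_congr_ae (Filter.Eventually.of_forall hWpt)
      _ = (g z * (|D.det|⁻¹ * gaussPdf Ob x)) * ∫ y, eE y * gaussPdf C (y - B *ᵥ x) :=
          integral_const_mul _ _
      _ = (g z * (|D.det|⁻¹ * gaussPdf Ob x)) * ∫ y in E, gaussPdf C (y - B *ᵥ x) := by
          rw [integral_congr_ae (Filter.Eventually.of_forall hind),
            integral_indicator hEmeas]
      _ = (g z * (|D.det|⁻¹ * gaussPdf Ob x)) * gaussCdf C (ga + B *ᵥ x) := by
          rw [hE]
          rw [setIntegral_gauss_shift C ga (B *ᵥ x)]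
      _ = g z * gaussPdf Om (z - xi) * gaussCdf C (ga + B *ᵥ x) := by
          rw [hOmPdf]
  -- Step 4: the denominator
  have hDen : (∫ r1 in E, gaussPdf Ga r1) = gaussCdf Ga ga := by
    have h := setIntegral_gauss_shift Ga ga 0
    simp only [sub_zero, add_zero] at h
    rw [hE]
    exact h
  -- Step 5: rewriting the right-hand side
  have hRHS : (∫ z : Fin p → ℝ, g z * sunPdf xi Om De ga Ga z)
      = (∫ z, g z * gaussPdf Om (z - xi) * gaussCdf C (ga + B *ᵥ (Di *ᵥ (z - xi))))
        / gaussCdf Ga ga := by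
    rw [← integral_div]
    apply integral_congr_ae
    filter_upwards with z
    unfold sunPdf
    have hmv : (Deᵀ * (corrMat Om)⁻¹ * (dMat Om)⁻¹) *ᵥ (z - xi) = B *ᵥ (Di *ᵥ (z - xi)) := by
      rw [Matrix.mulVec_mulVec]
    have hCC : Ga - Deᵀ * (corrMat Om)⁻¹ * De = C := rfl
    rw [hmv, hCC]
    ring
  have hNum3' : (∫ z : Fin p → ℝ, ∫ y, W y z)
      = ∫ z : Fin p → ℝ, g z * gaussPdf Om (z - xi)
          * gaussCdf C (ga + B *ᵥ (Di *ᵥ (z - xi))) :=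
    integral_congr_ae (Filter.Eventually.of_forall hNum3)
  rw [hNum1, hNum2, hNum3', hDen, hRHS]
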